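/- Let (T, M) be a local domain with residue field k and residue map π : T → k, and let D be an integral domain with fraction field k, viewed as a subring of k. If every flat overring of the pullback A := D ×_k T = π⁻¹(D) is a localization of A (at some multiplicative subset of A), then every flat overring of D is a localization of D (at some multiplicative subset of D). -/

import Mathlib

open TensorProduct LinearMap

set_option maxHeartbeats 1000000 in
set_option synthInstance.maxHeartbeats 400000 in
theorem cond_to_flat {F : Type*} [Field F] {R S : Subring F} (hRS : R ≤ S)
    (hc : ∀ s : S, (1 : S) ∈ Ideal.span {x : S | (x : F) ∈ R ∧ (x : F) * (s : F) ∈ R}) :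
    @Module.Flat R S _ _ (RingHom.toAlgebra (Subring.inclusion hRS)).toModule := by
  letI : Algebra R S := RingHom.toAlgebra (Subring.inclusion hRS)
  have hsmul : ∀ (r : R) (s : S), ((r • s : S) : F) = (r : F) * (s : F) := fun r s => by
    rw [Algebra.smul_def]; rfl
  rw [Module.Flat.iff_rTensor_injective']
  intro I
  rw [injective_iff_map_eq_zero]
  intro x hx
  obtain ⟨G, rfl⟩ := TensorProduct.exists_finset x
  -- the relation in F
  have h0 : (∑ p ∈ G, ((p.1 : R) • p.2 : S)) = 0 := by
    have h := congrArg (TensorProduct.lid R S).toLinearMap hx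
    rw [map_zero, map_sum] at h
    simpa using h
  have hrel : ∑ p ∈ G, ((p.1 : R) : F) * ((p.2 : S) : F) = 0 := by
    have := congrArg (fun y : S => (y : F)) h0
    push_cast at this
    simpa [hsmul] using this
  classical
  -- common conductor
  have key : ∀ G' : Finset (↥I × ↥S), (1:S) ∈ Ideal.span {c : S | (c:F) ∈ R ∧
      ∀ p ∈ G', (c : F) * ((p.2 : S) : F) ∈ R} := by
    intro G'
    induction G' using Finset.induction_on with
    | empty =>
      refine Ideal.subset_span ⟨?_, ?_⟩
      · simpa using R.one_mem
      · simp
    | @insert q G'' hq ih =>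
      have hmul := Ideal.mul_mem_mul ih (hc q.2)
      rw [Ideal.span_mul_span, one_mul] at hmul
      refine Ideal.span_mono ?_ hmul
      intro z hz
      simp only [Set.mem_mul] at hz
      obtain ⟨a, ha, b, hb, rfl⟩ := hz
      refine ⟨by push_cast; exact R.mul_mem ha.1 hb.1, ?_⟩
      intro p hp
      rcases Finset.mem_insert.mp hp with rfl | hp
      · have : ((a*b : S) : F) * ((p.2 : S) : F) = (a:F) * ((b:F) * ((p.2:S) : F)) := by
          push_cast; ring
        rw [this]; exact R.mul_mem ha.1 hb.2
      · have : ((a*b : S) : F) * ((p.2:S) : F) = (b:F) * ((a:F) * ((p.2:S):F)) := by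
          push_cast; ring
        rw [this]; exact R.mul_mem hb.1 (ha.2 p hp)
  obtain ⟨n, f, g, h1⟩ := (Submodule.mem_span_set').mp (key G)
  have h1F : ∑ i, ((f i : S) : F) * (((g i : S)) : F) = 1 := by
    have h := congrArg S.subtype h1
    rw [map_sum, map_one] at h
    simpa [smul_eq_mul] using h
  set r : Fin n → {p // p ∈ G} → R := fun i p =>
    ⟨((g i : S) : F) * ((p.1.2 : S) : F), (g i).2.2 p.1 p.2⟩ with hrdef
  have hp2 : ∀ p : {x // x ∈ G}, ∑ i, (r i p) • (f i) = p.1.2 := by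
    intro p
    apply Subtype.ext
    have h := map_sum S.subtype (fun i => (r i p) • (f i)) Finset.univ
    have hscal : ∀ i : Fin n, S.subtype ((r i p) • (f i))
        = ((g i : S) : F) * ((p.1.2 : S) : F) * ((f i : S) : F) := by
      intro i
      show (((r i p) • (f i) : S) : F) = _
      rw [hsmul]
    calc ((∑ i, (r i p) • (f i) : S) : F)
        = ∑ i, S.subtype ((r i p) • (f i)) := h
      _ = ∑ i, ((p.1.2 : S) : F) * (((f i : S) : F) * ((g i : S) : F)) := by
          refine Finset.sum_congr rfl fun i _ => ?_
          rw [hscal i]; ring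
      _ = ((p.1.2 : S) : F) * ∑ i, ((f i : S) : F) * ((g i : S) : F) := by
          rw [Finset.mul_sum]
      _ = ((p.1.2 : S) : F) := by rw [h1F, mul_one]
  have step : ∑ p ∈ G, p.1 ⊗ₜ[R] p.2
      = ∑ i, (∑ p ∈ G.attach, (r i p) • (p.1.1 : I)) ⊗ₜ[R] ((f i : S)) := by
    rw [← Finset.sum_attach G (fun p => p.1 ⊗ₜ[R] p.2)]
    have hterm : ∀ p : {x // x ∈ G}, (p.1.1 ⊗ₜ[R] p.1.2 : I ⊗[R] S)
        = ∑ i, ((r i p) • p.1.1) ⊗ₜ[R] (f i) := by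
      intro p
      conv_lhs => rw [← hp2 p]
      rw [tmul_sum]
      refine Finset.sum_congr rfl fun i _ => ?_
      rw [smul_tmul]
    rw [Finset.sum_congr rfl (fun p _ => hterm p), Finset.sum_comm]
    refine Finset.sum_congr rfl fun i _ => ?_
    rw [sum_tmul]
  rw [step]
  have inner : ∀ i, (∑ p ∈ G.attach, (r i p) • (p.1.1 : I)) = 0 := by
    intro i
    have hIcoe : ((∑ p ∈ G.attach, (r i p) • (p.1.1 : I) : I) : R)
        = ∑ p ∈ G.attach, (r i p) * (p.1.1 : R) := by
      have h := map_sum I.subtype (fun p => (r i p) • (p.1.1 : I)) G.attach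
      simpa [smul_eq_mul] using h
    apply Subtype.ext
    rw [hIcoe]
    apply Subtype.ext
    have h := map_sum R.subtype (fun p => (r i p) * ((p.1.1 : I) : R)) G.attach
    rw [show ((∑ p ∈ G.attach, (r i p) * ((p.1.1 : I) : R) : R) : F)
        = ∑ p ∈ G.attach, ((r i p : R) : F) * (((p.1.1 : I) : R) : F) by simpa using h]
    have : ∀ p : {x // x ∈ G}, ((r i p : R) : F) * (((p.1.1 : I) : R) : F)
        = ((g i : S) : F) * ((((p.1.1 : I) : R) : F) * ((p.1.2 : S) : F)) := by
      intro p
      show ((g i : S) : F) * ((p.1.2 : S) : F) * _ = _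
      ring
    rw [Finset.sum_congr rfl (fun p _ => this p), ← Finset.mul_sum]
    rw [Finset.sum_attach G (fun p => (((p.1 : I) : R) : F) * ((p.2 : S) : F))]
    rw [hrel, mul_zero]
    rfl
  rw [Finset.sum_congr rfl (fun i _ => by rw [inner i, zero_tmul])]
  exact Finset.sum_const_zero


set_option maxHeartbeats 1000000 in
set_option synthInstance.maxHeartbeats 400000 in
theorem flat_to_cond {F : Type*} [Field F] {R S : Subring F} (hRS : R ≤ S)
    (hfl : @Module.Flat R S _ _ (RingHom.toAlgebra (Subring.inclusion hRS)).toModule)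
    (hfr : ∀ s : S, ∃ a b : R, (b : F) ≠ 0 ∧ (b : F) * (s : F) = (a : F)) :
    ∀ s : S, (1 : S) ∈ Ideal.span {x : S | (x : F) ∈ R ∧ (x : F) * (s : F) ∈ R} := by
  letI : Algebra R S := RingHom.toAlgebra (Subring.inclusion hRS)
  have hsmul : ∀ (r : R) (s : S), ((r • s : S) : F) = (r : F) * (s : F) := fun r s => by
    rw [Algebra.smul_def]; rfl
  intro s
  obtain ⟨a, b, hb, hab⟩ := hfr s
  set g : (R × R) →ₗ[R] R := b • LinearMap.fst R R R - a • LinearMap.snd R R R with hgdef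
  have hg : ∀ x : R × R, g x = b * x.1 - a * x.2 := fun x => rfl
  have hexact := Module.Flat.lTensor_exact (M := S) (LinearMap.exact_subtype_ker_map g)
  set e : S ⊗[R] (R × R) := s ⊗ₜ (1, 0) + 1 ⊗ₜ (0, 1) with hedef
  have he : lTensor S g e = 0 := by
    rw [hedef, map_add, lTensor_tmul, lTensor_tmul]
    rw [← (TensorProduct.rid R S).map_eq_zero_iff]
    rw [map_add]
    rw [TensorProduct.rid_tmul, TensorProduct.rid_tmul]
    have h1 : g (1, 0) = b := by rw [hg]; simp
    have h2 : g (0, 1) = -a := by rw [hg]; simp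
    rw [h1, h2]
    apply Subtype.ext
    push_cast [hsmul]
    linear_combination hab
  obtain ⟨z, hz⟩ := (hexact e).mp he
  obtain ⟨G, rfl⟩ := TensorProduct.exists_finset z
  set Φ : S ⊗[R] (R × R) →ₗ[R] S :=
    (TensorProduct.rid R S).toLinearMap ∘ₗ lTensor S (LinearMap.snd R R R) with hPhi
  have hPhiE : Φ e = 1 := by
    rw [hedef, map_add]
    simp [Φ, lTensor_tmul, TensorProduct.rid_tmul]
  have hsum : (1 : S) = ∑ p ∈ G, (((p.2 : R × R)).2) • p.1 := by
    have h := congrArg Φ hz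
    rw [hPhiE] at h
    rw [map_sum, map_sum] at h
    rw [← h]
    refine (Finset.sum_congr rfl fun p _ => ?_).symm
    simp [Φ, lTensor_tmul, TensorProduct.rid_tmul]
  have hker2 : ∀ p : S × ↥(ker g), (((p.2 : R × R).2 : R) : F) * (s : F)
      = (((p.2 : R × R).1 : R) : F) := by
    intro p
    have h0 : g (p.2 : R × R) = 0 := p.2.2
    rw [hg] at h0
    have h0F : (b:F) * (((p.2 : R×R).1 : R) : F) - (a:F) * (((p.2 : R×R).2 : R) : F) = 0 := by
      have h1 := congrArg (fun y : R => (y : F)) h0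
      push_cast at h1
      simpa using h1
    apply mul_left_cancel₀ hb
    calc (b:F) * ((((p.2 : R×R).2 : R) : F) * (s:F))
        = (((p.2:R×R).2 : R) : F) * ((b:F) * (s:F)) := by ring
      _ = (((p.2:R×R).2 : R) : F) * (a : F) := by rw [hab]
      _ = (b:F) * (((p.2:R×R).1 : R) : F) := by linear_combination (-1 : F) * h0F
  rw [show (1 : S) = ∑ p ∈ G, (((p.2 : R × R)).2) • p.1 from hsum]
  refine Submodule.sum_mem _ fun p _ => ?_
  have hmem : ((Subring.inclusion hRS) ((p.2 : R × R).2) : S)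
      ∈ {x : S | (x : F) ∈ R ∧ (x : F) * (s : F) ∈ R} := by
    constructor
    · exact ((p.2 : R × R).2).2
    · have : (((Subring.inclusion hRS) ((p.2 : R × R).2) : S) : F)
          = (((p.2 : R × R).2 : R) : F) := rfl
      rw [this, hker2 p]
      exact ((p.2 : R × R).1).2
  have heq : (((p.2 : R × R)).2) • p.1 = p.1 * (Subring.inclusion hRS) ((p.2 : R × R).2) := by
    rw [Algebra.smul_def]
    rw [mul_comm]
    rfl
  rw [heq]
  exact Ideal.mul_mem_left _ _ (Ideal.subset_span hmem)


set_option maxHeartbeats 1000000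
set_option synthInstance.maxHeartbeats 400000

/-- Let `(T, M)` be a local domain (a subring of its fraction field `K`) with residue
field `k` and residue map `π`, and let `D` be a subring of `k` with fraction field `k`.
If every flat overring of the pullback `A = π⁻¹(D)` is a localization of `A`, then every
flat overring of `D` is a localization of `D`. -/
theorem stmt_11 {K k : Type*} [Field K] [Field k] (T : Subring K)
    [IsLocalRing T] [IsFractionRing T K]
    (π : T →+* k) (hπ : Function.Surjective π)
    (hker : RingHom.ker π = IsLocalRing.maximalIdeal T)
    (D : Subring k) [IsFractionRing D k]
    (hA : ∀ S : Subring K, ∀ hAS : (D.comap π).map T.subtype ≤ S,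
      @Module.Flat ((D.comap π).map T.subtype) S _ _
          (RingHom.toAlgebra (Subring.inclusion hAS)).toModule →
        ∃ W : Submonoid ((D.comap π).map T.subtype),
          @IsLocalization ((D.comap π).map T.subtype) _ W S _
            (RingHom.toAlgebra (Subring.inclusion hAS))) :
    ∀ S : Subring k, ∀ hDS : D ≤ S,
      @Module.Flat D S _ _ (RingHom.toAlgebra (Subring.inclusion hDS)).toModule →
        ∃ W : Submonoid D,
          @IsLocalization D _ W S _ (RingHom.toAlgebra (Subring.inclusion hDS)) := by
  intro S hDS hflat
  classical
  set A : Subring K := (D.comap π).map T.subtype with hAdef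
  set B : Subring K := (S.comap π).map T.subtype with hBdef
  have memA : ∀ x : K, x ∈ A ↔ ∃ hx : x ∈ T, π ⟨x, hx⟩ ∈ D := by
    intro x
    constructor
    · rintro ⟨t, ht, rfl⟩
      exact ⟨t.2, Subring.mem_comap.mp ht⟩
    · rintro ⟨hx, h⟩
      exact ⟨⟨x, hx⟩, Subring.mem_comap.mpr h, rfl⟩
  have memB : ∀ x : K, x ∈ B ↔ ∃ hx : x ∈ T, π ⟨x, hx⟩ ∈ S := by
    intro x
    constructor
    · rintro ⟨t, ht, rfl⟩
      exact ⟨t.2, Subring.mem_comap.mp ht⟩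
    · rintro ⟨hx, h⟩
      exact ⟨⟨x, hx⟩, Subring.mem_comap.mpr h, rfl⟩
  have hAB : A ≤ B := by
    intro x hx
    obtain ⟨hxT, hxD⟩ := (memA x).mp hx
    exact (memB x).mpr ⟨hxT, hDS hxD⟩
  have hAT : A ≤ T := by rintro x ⟨t, _, rfl⟩; exact t.2
  have hBT : B ≤ T := by rintro x ⟨t, _, rfl⟩; exact t.2
  have πcongr : ∀ (t₁ t₂ : T), (t₁ : K) = (t₂ : K) → π t₁ = π t₂ :=
    fun t₁ t₂ h => congrArg π (Subtype.ext h)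
  -- the fraction condition for D ⊆ S ⊆ k
  have halg : ∀ d : D, (algebraMap D k d) = (d : k) := fun d => rfl
  have hfr : ∀ s : S, ∃ a b : D, (b : k) ≠ 0 ∧ (b : k) * (s : k) = (a : k) := by
    intro s
    obtain ⟨a, b, hb, hq⟩ := IsFractionRing.div_surjective (A := D) (s : k)
    have hb0 : (b : k) ≠ 0 := by
      have h0 : b ≠ 0 := nonZeroDivisors.ne_zero hb
      exact fun h => h0 (Subtype.ext h)
    refine ⟨a, b, hb0, ?_⟩
    rw [halg, halg] at hq
    rw [← hq, mul_comm, div_mul_cancel₀ _ hb0]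
  -- conductor condition for D ⊆ S (need it below, named hcS)
  have hcS : ∀ s : S, (1 : S) ∈ Ideal.span {x : S | (x : k) ∈ D ∧ (x : k) * (s : k) ∈ D} :=
    flat_to_cond hDS hflat hfr
  -- the residue maps on A and B
  have hmemρ : ∀ x : A, π (Subring.inclusion hAT x) ∈ D := by
    intro x
    obtain ⟨hxT, hxD⟩ := (memA x.1).mp x.2
    have he : Subring.inclusion hAT x = ⟨x.1, hxT⟩ := Subtype.ext rfl
    rw [he]; exact hxD
  set ρ : A →+* D := RingHom.codRestrict (π.comp (Subring.inclusion hAT)) D hmemρ with hρ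
  have hρval : ∀ (x : A) (hxT : (x:K) ∈ T), ((ρ x : D) : k) = π ⟨x.1, hxT⟩ := by
    intro x hxT
    show π (Subring.inclusion hAT x) = _
    exact πcongr _ _ rfl
  have hmemρB : ∀ x : B, π (Subring.inclusion hBT x) ∈ S := by
    intro x
    obtain ⟨hxT, hxS⟩ := (memB x.1).mp x.2
    have he : Subring.inclusion hBT x = ⟨x.1, hxT⟩ := Subtype.ext rfl
    rw [he]; exact hxS
  set ρB : B →+* S := RingHom.codRestrict (π.comp (Subring.inclusion hBT)) S hmemρB with hρB
  have hρBval : ∀ (x : B) (hxT : (x:K) ∈ T), ((ρB x : S) : k) = π ⟨x.1, hxT⟩ := by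
    intro x hxT
    show π (Subring.inclusion hBT x) = _
    exact πcongr _ _ rfl
  -- transfer of the conductor condition
  have hcB : ∀ bb : B, (1 : B) ∈ Ideal.span {x : B | (x : K) ∈ A ∧ (x : K) * (bb : K) ∈ A} := by
    intro bb
    have hbT : (bb : K) ∈ T := hBT bb.2
    obtain ⟨n, f, g, h1⟩ := Submodule.mem_span_set'.mp (hcS (ρB bb))
    choose tf htf using fun i => hπ ((f i : S) : k)
    choose tg htg using fun i => hπ (((g i : S) : S) : k)
    have htfB : ∀ i, ((tf i : T) : K) ∈ B := by
      intro i
      refine (memB _).mpr ⟨(tf i).2, ?_⟩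
      show π (tf i) ∈ S
      rw [htf i]; exact (f i).2
    have htgA : ∀ i, ((tg i : T) : K) ∈ A := by
      intro i
      refine (memA _).mpr ⟨(tg i).2, ?_⟩
      show π (tg i) ∈ D
      rw [htg i]; exact (g i).2.1
    have htgB : ∀ i, ((tg i : T) : K) ∈ B := fun i => hAB (htgA i)
    have htgcond : ∀ i, ((tg i : T) : K) * (bb : K) ∈ A := by
      intro i
      refine (memA _).mpr ⟨(tg i * ⟨bb.1, hbT⟩ : T).2, ?_⟩
      show π (tg i * ⟨bb.1, hbT⟩) ∈ D
      rw [map_mul, htg i, ← hρBval bb hbT]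
      exact (g i).2.2
    set u : T := ∑ i, tf i * tg i with hu
    have hπu : π u = 1 := by
      rw [hu, map_sum]
      have hterm : ∀ i : Fin n, π (tf i * tg i) = ((f i : S) : k) * (((g i : S)) : k) := by
        intro i; rw [map_mul, htf, htg]
      rw [Finset.sum_congr rfl fun i _ => hterm i]
      have hc := congrArg S.subtype h1
      rw [map_sum, map_one] at hc
      simpa [smul_eq_mul] using hc
    have hμM : ((1 : T) - u) ∈ IsLocalRing.maximalIdeal T := by
      rw [← hker, RingHom.mem_ker, map_sub, map_one, hπu, sub_self]
    have hμA : (((1:T) - u : T) : K) ∈ A := by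
      refine (memA _).mpr ⟨((1:T) - u : T).2, ?_⟩
      show π ((1:T) - u) ∈ D
      rw [map_sub, map_one, hπu, sub_self]
      exact D.zero_mem
    have hμB : (((1:T) - u : T) : K) ∈ B := hAB hμA
    have hμcond : (((1:T) - u : T) : K) * (bb : K) ∈ A := by
      have hprod : (((1:T) - u) * ⟨bb.1, hbT⟩ : T) ∈ IsLocalRing.maximalIdeal T :=
        Ideal.mul_mem_right _ _ hμM
      rw [← hker, RingHom.mem_ker] at hprod
      refine (memA _).mpr ⟨(((1:T) - u) * ⟨bb.1, hbT⟩ : T).2, ?_⟩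
      show π (((1:T) - u) * ⟨bb.1, hbT⟩) ∈ D
      rw [hprod]
      exact D.zero_mem
    have hucoe : ((u : T) : K) = ∑ i, ((tf i : T) : K) * ((tg i : T) : K) := by
      rw [hu]
      push_cast
      ring
    have key : (1 : B) = (∑ i, (⟨((tf i : T) : K), htfB i⟩ : B) * ⟨((tg i : T) : K), htgB i⟩)
        + ⟨(((1:T) - u : T) : K), hμB⟩ := by
      apply Subtype.ext
      have hc := map_sum B.subtype
        (fun i => (⟨((tf i : T) : K), htfB i⟩ : B) * ⟨((tg i : T) : K), htgB i⟩) Finset.univ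
      show (1 : K) = _
      push_cast
      rw [hucoe]
      ring
    rw [key]
    refine Submodule.add_mem _ (Submodule.sum_mem _ fun i _ => ?_)
      (Ideal.subset_span ⟨hμA, hμcond⟩)
    exact Ideal.mul_mem_left _ _ (Ideal.subset_span ⟨htgA i, htgcond i⟩)
  -- B is flat over A, apply the hypothesis
  have hflatB := cond_to_flat hAB hcB
  obtain ⟨W, hW⟩ := hA B hAB hflatB
  letI : Algebra A B := RingHom.toAlgebra (Subring.inclusion hAB)
  haveI : IsLocalization W B := hW
  letI : Algebra D S := RingHom.toAlgebra (Subring.inclusion hDS)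
  have halgDS : ∀ d : D, ((algebraMap D S d : S) : k) = (d : k) := fun d => rfl
  have halgAB : ∀ a : A, ((algebraMap A B a : B) : K) = (a : K) := fun a => rfl
  refine ⟨W.map ρ.toMonoidHom, ?_⟩
  constructor
  constructor
  · -- map_units'
    rintro ⟨y, hy⟩
    obtain ⟨x, hxW, rfl⟩ := hy
    obtain ⟨v, hv⟩ := IsLocalization.map_units (S := B) (M := W) ⟨x, hxW⟩
    set w : B := ((v⁻¹ : Bˣ) : B) with hwdef
    have hinv : algebraMap A B x * w = 1 := by
      rw [← hv, hwdef]; exact v.mul_inv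
    have hinvK : (x : K) * (w : K) = 1 := by
      have hc := congrArg (fun z : B => (z : K)) hinv
      push_cast at hc
      rw [← halgAB x]
      exact hc
    have hwT : (w : K) ∈ T := hBT w.2
    have hxT : (x : K) ∈ T := hAT x.2
    apply IsUnit.of_mul_eq_one (ρB w)
    apply Subtype.ext
    show ((algebraMap D S (ρ x) : S) : k) * ((ρB w : S) : k) = 1
    rw [halgDS, hρval x hxT, hρBval w hwT, ← map_mul]
    have h1 : (⟨(x : K), hxT⟩ * ⟨(w : K), hwT⟩ : T) = 1 := Subtype.ext hinvK
    rw [h1, map_one]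
  · -- surj'
    intro z
    obtain ⟨t, ht⟩ := hπ (z : k)
    have htB : (t : K) ∈ B := by
      refine (memB _).mpr ⟨t.2, ?_⟩
      show π t ∈ S
      rw [ht]; exact z.2
    obtain ⟨⟨x, w⟩, hxw⟩ := IsLocalization.surj (S := B) (M := W) (⟨(t : K), htB⟩ : B)
    refine ⟨⟨ρ x, ⟨ρ.toMonoidHom (w : A), Submonoid.mem_map_of_mem _ w.2⟩⟩, ?_⟩
    apply Subtype.ext
    have hwT : ((w : A) : K) ∈ T := hAT (w : A).2
    have hxT : (x : K) ∈ T := hAT x.2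
    show (z : k) * ((algebraMap D S (ρ (w : A)) : S) : k) = ((algebraMap D S (ρ x) : S) : k)
    rw [halgDS, halgDS, hρval x hxT, hρval (w : A) hwT, ← ht, ← map_mul]
    apply πcongr
    have hc := congrArg (fun z : B => (z : K)) hxw
    push_cast at hc
    rw [halgAB, halgAB] at hc
    exact hc
  · -- exists_of_eq
    intro x y h
    refine ⟨1, ?_⟩
    have hxy : x = y := by
      apply Subtype.ext
      exact congrArg (fun z : S => (z : k)) h
    rw [hxy]
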